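/- arXiv:0906.4711 — 4 statements merged into one kernel-verified Lean document; each statement's English description precedes it below -/
import Mathlib

section
/- (Lamport) For every qualitative LTL formula φ (a formula containing no occurrence of the next operator X) and any two stutter-equivalent ω-words w and w', it holds that w ⊨ φ if and only if w' ⊨ φ; consequently the set of models ⟦φ⟧ of every qualitative LTL formula is closed under stuttering. -/
inductive LTL (α : Type) : Type
  | atom : α → LTL α
  | not : LTL α → LTL α
  | and : LTL α → LTL α → LTL α
  | until_ : LTL α → LTL α → LTL α
  | next : LTL α → LTL α

abbrev Word (α : Type) := ℕ → Set α

def LTL.Sat {α : Type} (w : Word α) : LTL α → ℕ → Prop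
  | .atom p, i => p ∈ w i
  | .not φ, i => ¬ φ.Sat w i
  | .and φ ψ, i => φ.Sat w i ∧ ψ.Sat w i
  | .until_ φ ψ, i => ∃ j, i ≤ j ∧ ψ.Sat w j ∧ ∀ k, i ≤ k → k < j → φ.Sat w k
  | .next φ, i => φ.Sat w (i+1)

def LTL.Satisfiable {α : Type} (φ : LTL α) : Prop := ∃ w : Word α, φ.Sat w 0

def LTL.Qualitative {α : Type} : LTL α → Prop
  | .atom _ => True
  | .not φ => φ.Qualitative
  | .and φ ψ => φ.Qualitative ∧ ψ.Qualitative
  | .until_ φ ψ => φ.Qualitative ∧ ψ.Qualitative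
  | .next _ => False

def LTL.Propositional {α : Type} : LTL α → Prop
  | .atom _ => True
  | .not φ => φ.Propositional
  | .and φ ψ => φ.Propositional ∧ ψ.Propositional
  | .until_ _ _ => False
  | .next _ => False

def LTL.size {α : Type} : LTL α → ℕ
  | .atom _ => 1
  | .not φ => φ.size + 1
  | .and φ ψ => φ.size + ψ.size + 1
  | .until_ φ ψ => φ.size + ψ.size + 1
  | .next φ => φ.size + 1

def StutterStep {α : Type} (w : Word α) (i : ℕ) : Prop :=
  w (i+1) = w i ∧ ∃ j, i < j ∧ w j ≠ w i

def NonStutterStep {α : Type} (w : Word α) (i : ℕ) : Prop :=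
  w (i+1) ≠ w i ∨ ∀ j, w (i+j) = w i

def StutterRemoval {α : Type} (w w' : Word α) : Prop :=
  ∃ f : ℕ → ℕ, StrictMono f ∧ (∀ k, w' k = w (f k)) ∧
    ∀ i, i ∉ Set.range f → StutterStep w i

def StutterEquiv {α : Type} (w w' : Word α) : Prop :=
  StutterRemoval w w' ∨ StutterRemoval w' w

def ClosedUnderStuttering {α : Type} (W : Set (Word α)) : Prop :=
  ∀ w ∈ W, ∀ w', StutterEquiv w w' → w' ∈ W


namespace StutterAux

variable {α : Type}

noncomputable def g (f : ℕ → ℕ) (hf : StrictMono f) (m : ℕ) : ℕ :=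
  Nat.find (⟨m, hf.le_apply⟩ : ∃ k, m ≤ f k)

lemma le_f_g (f : ℕ → ℕ) (hf : StrictMono f) (m : ℕ) : m ≤ f (g f hf m) := by
  unfold g; exact Nat.find_spec (⟨m, hf.le_apply⟩ : ∃ k, m ≤ f k)

lemma g_le (f : ℕ → ℕ) (hf : StrictMono f) {m k : ℕ} (h : m ≤ f k) : g f hf m ≤ k :=
  Nat.find_le h

lemma lt_g (f : ℕ → ℕ) (hf : StrictMono f) {m k : ℕ} (h : f k < m) : k < g f hf m := by
  by_contra h'
  push_neg at h'
  have h2 := hf.monotone h'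
  have h3 := le_f_g f hf m
  omega

lemma g_mono (f : ℕ → ℕ) (hf : StrictMono f) {m n : ℕ} (h : m ≤ n) :
    g f hf m ≤ g f hf n :=
  g_le f hf (le_trans h (le_f_g f hf n))

lemma g_f (f : ℕ → ℕ) (hf : StrictMono f) (k : ℕ) : g f hf (f k) = k := by
  refine le_antisymm (g_le f hf le_rfl) ?_
  by_contra h'
  push_neg at h'
  have := hf h'
  have := le_f_g f hf (f k)
  omega

lemma w_eq (f : ℕ → ℕ) (hf : StrictMono f) (w : Word α)
    (hs : ∀ i, i ∉ Set.range f → w (i+1) = w i) :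
    ∀ m, w m = w (f (g f hf m)) := by
  intro m
  generalize hd : f (g f hf m) - m = d
  induction d generalizing m with
  | zero =>
    have := le_f_g f hf m
    have : f (g f hf m) = m := by omega
    rw [this]
  | succ d ih =>
    have h1 := le_f_g f hf m
    have hm : m ∉ Set.range f := by
      rintro ⟨k, rfl⟩
      rw [g_f] at hd h1
      omega
    have hg : g f hf (m+1) = g f hf m := by
      refine le_antisymm (g_le f hf ?_) (g_mono f hf (by omega))
      have : m ≠ f (g f hf m) := by
        intro h; exact hm ⟨_, h.symm⟩
      omega
    rw [← hs m hm, ← hg]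
    apply ih
    rw [hg]; omega

lemma sat_iff (f : ℕ → ℕ) (hf : StrictMono f) (w w' : Word α)
    (hw : ∀ k, w' k = w (f k))
    (hs : ∀ i, i ∉ Set.range f → w (i+1) = w i) :
    ∀ φ : LTL α, φ.Qualitative → ∀ m, (φ.Sat w m ↔ φ.Sat w' (g f hf m)) := by
  intro φ
  induction φ with
  | atom p =>
    intro _ m
    simp only [LTL.Sat, hw, ← w_eq f hf w hs m]
  | not φ ih =>
    intro h m
    simp only [LTL.Sat, ih h m]
  | and φ ψ ihφ ihψ =>
    intro h m
    simp only [LTL.Sat, ihφ h.1 m, ihψ h.2 m]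
  | next φ ih =>
    intro h; exact absurd h (by simp [LTL.Qualitative])
  | until_ φ ψ ihφ ihψ =>
    intro h m
    obtain ⟨hφq, hψq⟩ := h
    constructor
    · rintro ⟨j, hmj, hψj, hφk⟩
      refine ⟨g f hf j, g_mono f hf hmj, (ihψ hψq j).mp hψj, ?_⟩
      intro k' h1 h2
      have hk1 : m ≤ f k' := le_trans (le_f_g f hf m) (hf.monotone h1)
      have hk2 : f k' < j := by
        by_contra h'
        push_neg at h'
        exact absurd (g_le f hf h') (by omega)
      have := (ihφ hφq (f k')).mp (hφk (f k') hk1 hk2)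
      rwa [g_f] at this
    · rintro ⟨j', h1, hψj, hφk⟩
      rcases eq_or_lt_of_le h1 with heq | hlt
      · exact ⟨m, le_rfl, (ihψ hψq m).mpr (heq ▸ hψj), fun k hk1 hk2 => by omega⟩
      · obtain ⟨t, rfl⟩ : ∃ t, j' = t + 1 := ⟨j' - 1, by omega⟩
        have hgj : g f hf (f t + 1) = t + 1 := by
          have h2 : t < g f hf (f t + 1) := lt_g f hf (by omega)
          have h3 : g f hf (f t + 1) ≤ t + 1 := g_le f hf (hf (by omega))
          omega
        have hmft : m ≤ f t := le_trans (le_f_g f hf m) (hf.monotone (by omega))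
        refine ⟨f t + 1, by omega, (ihψ hψq (f t + 1)).mpr (hgj ▸ hψj), ?_⟩
        intro k hk1 hk2
        refine (ihφ hφq k).mpr (hφk _ (g_mono f hf hk1) ?_)
        have : g f hf k ≤ t := g_le f hf (by omega)
        omega

lemma g_zero (f : ℕ → ℕ) (hf : StrictMono f) : g f hf 0 = 0 :=
  Nat.le_zero.mp (g_le f hf (Nat.zero_le _))

lemma removal_sat (w w' : Word α) (h : StutterRemoval w w')
    (φ : LTL α) (hq : φ.Qualitative) : φ.Sat w 0 ↔ φ.Sat w' 0 := by
  obtain ⟨f, hf, hw, hs⟩ := h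
  have := sat_iff f hf w w' hw (fun i hi => (hs i hi).1) φ hq 0
  rwa [g_zero] at this

end StutterAux

/-- (Lamport) Qualitative LTL formulas are insensitive to stuttering: stutter-equivalent
words satisfy the same qualitative formulas; consequently the set of models of every
qualitative LTL formula is closed under stuttering. -/
theorem stmt0 {α : Type} :
    (∀ φ : LTL α, φ.Qualitative → ∀ w w' : Word α, StutterEquiv w w' →
      (φ.Sat w 0 ↔ φ.Sat w' 0)) ∧
    (∀ φ : LTL α, φ.Qualitative → ClosedUnderStuttering {w : Word α | φ.Sat w 0}) := by
  have main : ∀ φ : LTL α, φ.Qualitative → ∀ w w' : Word α, StutterEquiv w w' →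
      (φ.Sat w 0 ↔ φ.Sat w' 0) := by
    intro φ hq w w' h
    rcases h with h | h
    · exact StutterAux.removal_sat w w' h φ hq
    · exact (StutterAux.removal_sat w' w h φ hq).symm
  exact ⟨main, fun φ hq w hw w' hequiv => (main φ hq w w' hequiv).mp hw⟩
end

section
/- (Peled–Wilke) If a set W of ω-words over 𝒫 is closed under stuttering and is LTL-expressible, i.e., W = ⟦φ⟧ for some LTL formula φ, then there exists a qualitative LTL formula ψ (containing no occurrence of X) with ⟦ψ⟧ = W. -/
noncomputable section PW
open Classical
variable {α : Type}

def ltop (p0 : α) : LTL α := .not (.and (.atom p0) (.not (.atom p0)))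
def lbot (p0 : α) : LTL α := .and (.atom p0) (.not (.atom p0))
def lor (a b : LTL α) : LTL α := .not (.and (.not a) (.not b))
def lG (p0 : α) (φ : LTL α) : LTL α := .not (.until_ (ltop p0) (.not φ))
def bigOr (p0 : α) : List (LTL α) → LTL α
  | [] => lbot p0
  | a :: l => lor a (bigOr p0 l)
def lit (S : List α) (p : α) : LTL α := if p ∈ S then .atom p else .not (.atom p)
def chi (p0 : α) (S : List α) : List α → LTL α
  | [] => ltop p0
  | p :: L => .and (lit S p) (chi p0 S L)
def tr (p0 : α) (L : List α) : LTL α → LTL α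
  | .atom p => .atom p
  | .not φ => .not (tr p0 L φ)
  | .and φ ψ => .and (tr p0 L φ) (tr p0 L ψ)
  | .until_ φ ψ => .until_ (tr p0 L φ) (tr p0 L ψ)
  | .next φ =>
    bigOr p0 (L.sublists.map fun S =>
      .and (chi p0 S L) (lor (.until_ (chi p0 S L) (.and (.not (chi p0 S L)) (tr p0 L φ)))
        (.and (lG p0 (chi p0 S L)) (tr p0 L φ))))

theorem sat_ltop (p0 : α) (v : Word α) (i : ℕ) : (ltop p0).Sat v i := by
  simp [ltop, LTL.Sat]

theorem sat_lbot (p0 : α) (v : Word α) (i : ℕ) : ¬ (lbot p0).Sat v i := by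
  simp [lbot, LTL.Sat]

theorem sat_lor (a b : LTL α) (v : Word α) (i : ℕ) :
    (lor a b).Sat v i ↔ a.Sat v i ∨ b.Sat v i := by
  simp [lor, LTL.Sat]; tauto

theorem sat_lG (p0 : α) (φ : LTL α) (v : Word α) (i : ℕ) :
    (lG p0 φ).Sat v i ↔ ∀ j, i ≤ j → φ.Sat v j := by
  simp only [lG, LTL.Sat]
  constructor
  · intro h j hj
    by_contra hb
    exact h ⟨j, hj, hb, fun k _ _ => sat_ltop p0 v k⟩
  · rintro h ⟨j, hj, hb, -⟩; exact hb (h j hj)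

theorem sat_bigOr (p0 : α) (l : List (LTL α)) (v : Word α) (i : ℕ) :
    (bigOr p0 l).Sat v i ↔ ∃ a ∈ l, a.Sat v i := by
  induction l with
  | nil => simpa [bigOr] using sat_lbot p0 v i
  | cons a l ih => simp [bigOr, sat_lor, ih]

theorem sat_chi (p0 : α) (S L : List α) (v : Word α) (i : ℕ) :
    (chi p0 S L).Sat v i ↔ ∀ p ∈ L, (p ∈ v i ↔ p ∈ S) := by
  induction L with
  | nil => simp [chi, sat_ltop]
  | cons p L ih =>
    simp only [chi, LTL.Sat, ih, List.mem_cons]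
    constructor
    · rintro ⟨h1, h2⟩ q hq
      rcases hq with rfl | hq
      · unfold lit at h1; split at h1 <;> simp_all [LTL.Sat]
      · exact h2 q hq
    · intro h
      refine ⟨?_, fun q hq => h q (Or.inr hq)⟩
      unfold lit; split <;> simp_all [LTL.Sat]

def atomsOf : LTL α → List α
  | .atom p => [p]
  | .not φ => atomsOf φ
  | .and φ ψ => atomsOf φ ++ atomsOf ψ
  | .until_ φ ψ => atomsOf φ ++ atomsOf ψ
  | .next φ => atomsOf φ

theorem qual_chi (p0 : α) (S L : List α) : (chi p0 S L).Qualitative := by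
  induction L with
  | nil => simp [chi, ltop, LTL.Qualitative]
  | cons p L ih =>
    refine ⟨?_, ih⟩
    unfold lit; split <;> trivial

theorem qual_bigOr (p0 : α) (l : List (LTL α)) (h : ∀ a ∈ l, a.Qualitative) :
    (bigOr p0 l).Qualitative := by
  induction l with
  | nil => exact ⟨trivial, trivial⟩
  | cons a l ih =>
    exact ⟨h a (by simp), ih fun b hb => h b (by simp [hb])⟩

theorem qual_tr (p0 : α) (L : List α) (φ : LTL α) : (tr p0 L φ).Qualitative := by
  induction φ with
  | atom p => trivial
  | not φ ih => exact ih
  | and φ ψ ih1 ih2 => exact ⟨ih1, ih2⟩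
  | until_ φ ψ ih1 ih2 => exact ⟨ih1, ih2⟩
  | next φ ih =>
    apply qual_bigOr
    intro a ha
    simp only [List.mem_map] at ha
    obtain ⟨S, -, rfl⟩ := ha
    have hq := qual_chi p0 S L
    exact ⟨hq, ⟨⟨hq, hq, ih⟩, ⟨⟨⟨trivial, trivial⟩, hq⟩, ih⟩⟩⟩

theorem atoms_chi (p0 : α) (S L0 L : List α) (hp0 : p0 ∈ L0) (hL : ∀ q ∈ L, q ∈ L0) :
    ∀ q ∈ atomsOf (chi p0 S L), q ∈ L0 := by
  induction L with
  | nil => intro q hq; simp [chi, ltop, atomsOf] at hq; simp [hq, hp0]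
  | cons p L ih =>
    intro q hq
    simp only [chi, atomsOf, List.mem_append] at hq
    rcases hq with hq | hq
    · unfold lit at hq; split at hq <;>
      · simp [atomsOf] at hq; exact hq ▸ hL p (by simp)
    · exact ih (fun r hr => hL r (by simp [hr])) q hq

theorem atoms_bigOr (p0 : α) (l : List (LTL α)) (q : α)
    (hq : q ∈ atomsOf (bigOr p0 l)) : q = p0 ∨ ∃ a ∈ l, q ∈ atomsOf a := by
  induction l with
  | nil => simp [bigOr, lbot, atomsOf] at hq; simp [hq]
  | cons a l ih =>
    simp only [bigOr, lor, atomsOf, List.mem_append] at hq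
    rcases hq with hq | hq
    · right; exact ⟨a, by simp, hq⟩
    · rcases ih hq with h | ⟨b, hb, hqb⟩
      · exact Or.inl h
      · exact Or.inr ⟨b, by simp [hb], hqb⟩

theorem atoms_tr (p0 : α) (L : List α) (hp0 : p0 ∈ L) (φ : LTL α)
    (h : ∀ q ∈ atomsOf φ, q ∈ L) : ∀ q ∈ atomsOf (tr p0 L φ), q ∈ L := by
  induction φ with
  | atom p => exact h
  | not φ ih => exact ih h
  | and φ ψ ih1 ih2 =>
    intro q hq
    simp only [tr, atomsOf, List.mem_append] at hq
    rcases hq with hq | hq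
    · exact ih1 (fun r hr => h r (by simp [atomsOf, hr])) q hq
    · exact ih2 (fun r hr => h r (by simp [atomsOf, hr])) q hq
  | until_ φ ψ ih1 ih2 =>
    intro q hq
    simp only [tr, atomsOf, List.mem_append] at hq
    rcases hq with hq | hq
    · exact ih1 (fun r hr => h r (by simp [atomsOf, hr])) q hq
    · exact ih2 (fun r hr => h r (by simp [atomsOf, hr])) q hq
  | next φ ih =>
    intro q hq
    have hih := ih (by simpa [atomsOf] using h)
    rcases atoms_bigOr p0 _ q hq with rfl | ⟨a, ha, hqa⟩
    · exact hp0
    · simp only [List.mem_map] at ha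
      obtain ⟨S, -, rfl⟩ := ha
      have hchi := atoms_chi p0 S L L hp0 (fun r hr => hr)
      simp only [atomsOf, lor, lG, ltop, List.mem_append] at hqa
      rcases hqa with hq1 | hq1
      · exact hchi q hq1
      rcases hq1 with hq1 | hq1
      rcases hq1 with hq1 | hq1
      · exact hchi q hq1
      rcases hq1 with hq1 | hq1
      · exact hchi q hq1
      · exact hih q hq1
      rcases hq1 with hq1 | hq1
      · simp only [atomsOf, List.mem_append, List.mem_singleton] at hq1
        rcases hq1 with (rfl | rfl) | hq1
        · exact hp0
        · exact hp0
        · exact hchi q hq1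
      · exact hih q hq1

theorem sat_agree (u v : Word α) (φ : LTL α)
    (h : ∀ p ∈ atomsOf φ, ∀ j, (p ∈ u j ↔ p ∈ v j)) :
    ∀ i, φ.Sat u i ↔ φ.Sat v i := by
  induction φ with
  | atom p => intro i; exact h p (by simp [atomsOf]) i
  | not φ ih => intro i; simp only [LTL.Sat]; rw [ih (by simpa [atomsOf] using h)]
  | and φ ψ ih1 ih2 =>
    intro i; simp only [LTL.Sat]
    rw [ih1 fun p hp => h p (by simp [atomsOf, hp]),
        ih2 fun p hp => h p (by simp [atomsOf, hp])]
  | until_ φ ψ ih1 ih2 =>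
    intro i; simp only [LTL.Sat]
    constructor <;>
    · rintro ⟨j, hj, h2, h1⟩
      refine ⟨j, hj, ?_, fun k hk1 hk2 => ?_⟩
      · first
        | exact (ih2 (fun p hp => h p (by simp [atomsOf, hp])) j).mp h2
        | exact (ih2 (fun p hp => h p (by simp [atomsOf, hp])) j).mpr h2
      · first
        | exact (ih1 (fun p hp => h p (by simp [atomsOf, hp])) k).mp (h1 k hk1 hk2)
        | exact (ih1 (fun p hp => h p (by simp [atomsOf, hp])) k).mpr (h1 k hk1 hk2)
  | next φ ih => intro i; simp only [LTL.Sat]; rw [ih (by simpa [atomsOf] using h)]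

theorem sat_congr (u v : Word α) (φ : LTL α) :
    ∀ i, (∀ j, i ≤ j → u j = v j) → (φ.Sat u i ↔ φ.Sat v i) := by
  induction φ with
  | atom p => intro i h; rw [LTL.Sat, LTL.Sat, h i le_rfl]
  | not φ ih => intro i h; simp only [LTL.Sat]; rw [ih i h]
  | and φ ψ ih1 ih2 => intro i h; simp only [LTL.Sat]; rw [ih1 i h, ih2 i h]
  | until_ φ ψ ih1 ih2 =>
    intro i h; simp only [LTL.Sat]
    constructor <;>
    · rintro ⟨j, hj, h2, h1⟩
      refine ⟨j, hj, ?_, fun k hk1 hk2 => ?_⟩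
      · first
        | exact (ih2 j fun m hm => h m (hj.trans hm)).mp h2
        | exact (ih2 j fun m hm => h m (hj.trans hm)).mpr h2
      · first
        | exact (ih1 k fun m hm => h m (hk1.trans hm)).mp (h1 k hk1 hk2)
        | exact (ih1 k fun m hm => h m (hk1.trans hm)).mpr (h1 k hk1 hk2)
  | next φ ih =>
    intro i h; simp only [LTL.Sat]
    exact ih (i+1) fun m hm => h m (by omega)

theorem sat_shift (v : Word α) (k : ℕ) (φ : LTL α) :
    ∀ i, φ.Sat (fun t => v (t + k)) i ↔ φ.Sat v (i + k) := by
  induction φ with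
  | atom p => intro i; simp [LTL.Sat]
  | not φ ih => intro i; simp only [LTL.Sat]; rw [ih i]
  | and φ ψ ih1 ih2 => intro i; simp only [LTL.Sat]; rw [ih1 i, ih2 i]
  | until_ φ ψ ih1 ih2 =>
    intro i; simp only [LTL.Sat]
    constructor
    · rintro ⟨j, hj, h2, h1⟩
      refine ⟨j + k, by omega, (ih2 j).mp h2, fun m hm1 hm2 => ?_⟩
      have := (ih1 (m - k)).mp (h1 (m - k) (by omega) (by omega))
      have he : m - k + k = m := by omega
      rwa [he] at this
    · rintro ⟨j, hj, h2, h1⟩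
      refine ⟨j - k, by omega, ?_, fun m hm1 hm2 => ?_⟩
      · rw [ih2 (j - k)]
        have he : j - k + k = j := by omega
        rwa [he]
      · exact (ih1 m).mpr (h1 (m + k) (by omega) (by omega))
  | next φ ih =>
    intro i; simp only [LTL.Sat]
    have := ih (i + 1)
    rwa [show i + 1 + k = i + k + 1 by omega] at this

theorem constOn (w : Word α) (a : ℕ) :
    ∀ b, a ≤ b → (∀ t, a ≤ t → t < b → w (t+1) = w t) → w b = w a := by
  intro b
  induction b with
  | zero => intro h _; rw [Nat.le_zero.mp h]
  | succ n ih =>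
    intro hab h
    rcases Nat.eq_or_lt_of_le hab with rfl | hlt
    · rfl
    · rw [h n (by omega) (by omega), ih (by omega) (fun t ht1 ht2 => h t ht1 (by omega))]

def idxc (f : ℕ → ℕ) (hf : StrictMono f) (m : ℕ) : ℕ :=
  Nat.find (p := fun k => m ≤ f k) ⟨m, hf.le_apply⟩

theorem le_f_idxc (f : ℕ → ℕ) (hf : StrictMono f) (m : ℕ) : m ≤ f (idxc f hf m) :=
  Nat.find_spec (p := fun k => m ≤ f k) ⟨m, hf.le_apply⟩

theorem idxc_min (f : ℕ → ℕ) (hf : StrictMono f) {m l : ℕ} (h : m ≤ f l) :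
    idxc f hf m ≤ l :=
  Nat.find_min' _ h

theorem idxc_mono (f : ℕ → ℕ) (hf : StrictMono f) {m m' : ℕ} (h : m ≤ m') :
    idxc f hf m ≤ idxc f hf m' :=
  idxc_min f hf (h.trans (le_f_idxc f hf m'))

theorem idxc_f (f : ℕ → ℕ) (hf : StrictMono f) (k : ℕ) : idxc f hf (f k) = k := by
  refine le_antisymm (idxc_min f hf le_rfl) ?_
  by_contra h
  push_neg at h
  have := le_f_idxc f hf (f k)
  have := hf h
  omega

theorem letter_idxc (w w' : Word α) (f : ℕ → ℕ) (hf : StrictMono f)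
    (hw' : ∀ k, w' k = w (f k)) (hstep : ∀ i, i ∉ Set.range f → w (i+1) = w i)
    (m : ℕ) : w m = w' (idxc f hf m) := by
  rw [hw']
  refine (constOn w m (f (idxc f hf m)) (le_f_idxc f hf m) fun t ht1 ht2 => ?_).symm
  apply hstep
  rintro ⟨l, rfl⟩
  have h1 : idxc f hf m ≤ l := idxc_min f hf ht1
  have h2 : f (idxc f hf m) ≤ f l := hf.monotone h1
  omega

theorem sat_idxc (w w' : Word α) (f : ℕ → ℕ) (hf : StrictMono f)
    (hw' : ∀ k, w' k = w (f k)) (hstep : ∀ i, i ∉ Set.range f → w (i+1) = w i)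
    (φ : LTL α) (hq : φ.Qualitative) :
    ∀ m, φ.Sat w m ↔ φ.Sat w' (idxc f hf m) := by
  induction φ with
  | atom p => intro m; rw [LTL.Sat, LTL.Sat, letter_idxc w w' f hf hw' hstep m]
  | not φ ih => intro m; simp only [LTL.Sat]; rw [ih hq m]
  | and φ ψ ih1 ih2 => intro m; simp only [LTL.Sat]; rw [ih1 hq.1 m, ih2 hq.2 m]
  | next φ ih => exact absurd hq (by simp [LTL.Qualitative])
  | until_ φ ψ ih1 ih2 =>
    intro m; simp only [LTL.Sat]
    constructor
    · rintro ⟨j, hj, h2, h1⟩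
      refine ⟨idxc f hf j, idxc_mono f hf hj, (ih2 hq.2 j).mp h2, fun l hl1 hl2 => ?_⟩
      have hkey : φ.Sat w (f l) ↔ φ.Sat w' l := by
        have := ih1 hq.1 (f l); rwa [idxc_f f hf l] at this
      refine hkey.mp (h1 (f l) ?_ ?_)
      · exact (le_f_idxc f hf m).trans (hf.monotone hl1)
      · by_contra hb
        push_neg at hb
        exact absurd (idxc_min f hf hb) (by omega)
    · rintro ⟨j', hj', h2, h1⟩
      have hex : ∃ j, m ≤ j ∧ idxc f hf j = j' :=
        ⟨f j', (le_f_idxc f hf m).trans (hf.monotone hj'), idxc_f f hf j'⟩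
      set j := Nat.find hex with hjdef
      obtain ⟨hjm, hjc⟩ := Nat.find_spec hex
      refine ⟨j, hjm, ?_, fun k hk1 hk2 => ?_⟩
      · rw [ih2 hq.2 j, hjc]; exact h2
      · have hck : idxc f hf k < j' := by
          have hle : idxc f hf k ≤ j' := hjc ▸ idxc_mono f hf hk2.le
        -- strict: if equal, contradicts minimality of j
          rcases lt_or_eq_of_le hle with h | h
          · exact h
          · exact absurd ⟨hk1, h⟩ (Nat.find_min hex hk2)
        rw [ih1 hq.1 k]
        exact h1 _ (idxc_mono f hf hk1) hck

theorem sat_const_shift (v : Word α) (i : ℕ) (hc : ∀ j, i ≤ j → v j = v i) (φ : LTL α) :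
    φ.Sat v (i+1) ↔ φ.Sat v i := by
  rw [← sat_shift v 1 φ i]
  exact sat_congr _ v φ i fun j hj => by rw [hc (j+1) (by omega), hc j hj]

theorem sat_tr (p0 : α) (L : List α) (v : Word α)
    (hsub : ∀ j p, p ∈ v j → p ∈ L)
    (hsf : ∀ i, v (i+1) = v i → ∀ j, i ≤ j → v j = v i)
    (φ : LTL α) :
    ∀ i, (tr p0 L φ).Sat v i ↔ φ.Sat v i := by
  have heq : ∀ S : List α, ∀ i1 i2, (chi p0 S L).Sat v i1 → (chi p0 S L).Sat v i2 →
      v i1 = v i2 := by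
    intro S i1 i2 h1 h2
    rw [sat_chi] at h1 h2
    ext p
    by_cases hp : p ∈ L
    · rw [h1 p hp, h2 p hp]
    · constructor <;> (intro hm; exact absurd (hsub _ p hm) hp)
  induction φ with
  | atom p => intro i; exact Iff.rfl
  | not φ ih => intro i; simp only [tr, LTL.Sat]; rw [ih i]
  | and φ ψ ih1 ih2 => intro i; simp only [tr, LTL.Sat]; rw [ih1 i, ih2 i]
  | until_ φ ψ ih1 ih2 =>
    intro i; simp only [tr, LTL.Sat]
    constructor <;>
    · rintro ⟨j, hj, h2, h1⟩
      refine ⟨j, hj, ?_, fun k hk1 hk2 => ?_⟩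
      · first | exact (ih2 j).mp h2 | exact (ih2 j).mpr h2
      · first | exact (ih1 k).mp (h1 k hk1 hk2) | exact (ih1 k).mpr (h1 k hk1 hk2)
  | next φ ih =>
    intro i
    show (bigOr p0 _).Sat v i ↔ φ.Sat v (i+1)
    rw [sat_bigOr]
    constructor
    · rintro ⟨a, ha, hsat⟩
      simp only [List.mem_map] at ha
      obtain ⟨S, -, rfl⟩ := ha
      obtain ⟨hχi, hdisj⟩ := hsat
      rw [sat_lor] at hdisj
      rcases hdisj with huntil | hGd
      · obtain ⟨j, hij, ⟨hnotχ, hT⟩, hall⟩ := huntil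
        have hji : i < j := by
          rcases Nat.eq_or_lt_of_le hij with rfl | h
          · exact absurd hχi hnotχ
          · exact h
        by_cases ha : v (i+1) = v i
        · exfalso
          have hc := hsf i ha
          apply hnotχ
          rw [sat_chi] at hχi ⊢
          intro p hp
          rw [hc j (by omega)]
          exact hχi p hp
        · have hj1 : j = i + 1 := by
            by_contra hne
            have hgt : i + 1 < j := by omega
            have := heq S (i+1) i (hall (i+1) (by omega) hgt) hχi
            exact ha this
          subst hj1
          exact (ih (i+1)).mp hT
      · obtain ⟨hG, hT⟩ := hGd
        rw [sat_lG] at hG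
        have hvv : v (i+1) = v i := heq S (i+1) i (hG (i+1) (by omega)) (hG i le_rfl)
        have hc := hsf i hvv
        rw [sat_const_shift v i hc]
        exact (ih i).mp hT
    · intro hφ
      set S := L.filter (fun p => decide (p ∈ v i)) with hSdef
      have hSmem : S ∈ L.sublists := List.mem_sublists.mpr List.filter_sublist
      have hχi : (chi p0 S L).Sat v i := by
        rw [sat_chi]
        intro p hp
        simp [hSdef, List.mem_filter, hp]
      refine ⟨_, List.mem_map.mpr ⟨S, hSmem, rfl⟩, hχi, ?_⟩
      rw [sat_lor]
      by_cases ha : v (i+1) = v i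
      · right
        have hc := hsf i ha
        refine ⟨?_, (ih i).mpr ((sat_const_shift v i hc φ).mp hφ)⟩
        rw [sat_lG]
        intro j hj
        rw [sat_chi] at hχi ⊢
        intro p hp
        rw [hc j hj]
        exact hχi p hp
      · left
        refine ⟨i+1, by omega, ⟨?_, (ih (i+1)).mpr hφ⟩, fun k hk1 hk2 => ?_⟩
        · intro hb
          exact ha (heq S (i+1) i hb hχi)
        · have : k = i := by omega
          subst this; exact hχi

theorem K_infinite (v : Word α) : {i | ¬ StutterStep v i}.Infinite := by
  by_cases hconst : ∃ N, ∀ j, N ≤ j → v j = v N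
  · obtain ⟨N, hN⟩ := hconst
    apply Set.Infinite.mono (s := Set.Ici N) _ (Set.Ici_infinite N)
    intro i hi
    simp only [Set.mem_Ici] at hi
    rintro ⟨-, j, hij, hj⟩
    exact hj (by rw [hN j (by omega), hN i hi])
  · push_neg at hconst
    apply Set.infinite_of_not_bddAbove
    rintro ⟨b, hb⟩
    obtain ⟨j, hj1, hj2⟩ := hconst (b+1)
    have : ∃ i, b + 1 ≤ i ∧ v (i+1) ≠ v i := by
      by_contra hno
      push_neg at hno
      exact hj2 (constOn v (b+1) j hj1 fun t ht1 _ => hno t ht1)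
    obtain ⟨i, hi1, hi2⟩ := this
    have : i ∈ {i | ¬ StutterStep v i} := fun hs => hi2 hs.1
    have := hb this
    omega

theorem exists_canon (v : Word α) : ∃ f : ℕ → ℕ, StrictMono f ∧
    (∀ i, i ∉ Set.range f → StutterStep v i) ∧
    (∀ i, v (f (i+1)) = v (f i) → ∀ j, i ≤ j → v (f j) = v (f i)) := by
  have hK := K_infinite v
  refine ⟨Nat.nth (fun i => ¬ StutterStep v i), Nat.nth_strictMono hK, ?_, ?_⟩
  · intro i hi
    by_contra hs
    exact hi (by rw [Nat.range_nth_of_infinite hK]; exact hs)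
  · intro i hvv j hij
    set f := Nat.nth (fun i => ¬ StutterStep v i) with hf
    have hfm : StrictMono f := Nat.nth_strictMono hK
    -- v is constant on (f i, f (i+1)]
    have hbetween : ∀ t, f i < t → t < f (i+1) → v (t+1) = v t := by
      intro t ht1 ht2
      have htk : t ∉ Set.range f := by
        rintro ⟨l, rfl⟩
        have h1 : i < l := hfm.lt_iff_lt.mp ht1
        have h2 : l < i + 1 := hfm.lt_iff_lt.mp ht2
        omega
      have : StutterStep v t := by
        by_contra hs
        exact htk (by rw [hf, Nat.range_nth_of_infinite hK]; exact hs)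
      exact this.1
    have hfi1 : f i < f (i+1) := hfm (by omega)
    have hstep : v (f i + 1) = v (f i) := by
      have hcon : v (f (i+1)) = v (f i + 1) :=
        constOn v (f i + 1) (f (i+1)) (by omega) fun t ht1 ht2 =>
          hbetween t (by omega) ht2
      rw [← hcon, hvv]
    have hmemK : ¬ StutterStep v (f i) := Nat.nth_mem_of_infinite hK i
    have hallconst : ∀ t, f i < t → v t = v (f i) := by
      intro t ht
      by_contra hne
      exact hmemK ⟨hstep, t, ht, hne⟩
    rcases Nat.eq_or_lt_of_le hij with rfl | h
    · rfl
    · exact hallconst (f j) (hfm h)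

theorem atoms_nonempty (φ : LTL α) : ∃ p, p ∈ atomsOf φ := by
  induction φ with
  | atom p => exact ⟨p, by simp [atomsOf]⟩
  | not φ ih => exact ih
  | and φ ψ ih1 ih2 => obtain ⟨p, hp⟩ := ih1; exact ⟨p, by simp [atomsOf, hp]⟩
  | until_ φ ψ ih1 ih2 => obtain ⟨p, hp⟩ := ih1; exact ⟨p, by simp [atomsOf, hp]⟩
  | next φ ih => exact ih

theorem stmt1' {α : Type} (W : Set (Word α)) (hclosed : ClosedUnderStuttering W)
    (φ : LTL α) (hexpr : W = {w : Word α | φ.Sat w 0}) :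
    ∃ ψ : LTL α, ψ.Qualitative ∧ {w : Word α | ψ.Sat w 0} = W := by
  obtain ⟨p0, hp0⟩ := atoms_nonempty φ
  set L := atomsOf φ with hL
  refine ⟨tr p0 L φ, qual_tr p0 L φ, ?_⟩
  ext w
  simp only [Set.mem_setOf_eq]
  set ψ := tr p0 L φ with hψ
  set v : Word α := fun j => {p | p ∈ w j ∧ p ∈ L} with hv
  have hagree : ∀ χ : LTL α, (∀ q ∈ atomsOf χ, q ∈ L) → ∀ i, χ.Sat w i ↔ χ.Sat v i := by
    intro χ hχ
    apply sat_agree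
    intro p hp j
    have hpL := hχ p hp
    simp [hv, hpL]
  -- step 1 : ψ on w ↔ ψ on v
  have h1 : ψ.Sat w 0 ↔ ψ.Sat v 0 :=
    hagree ψ (atoms_tr p0 L hp0 φ (fun q hq => hq)) 0
  -- canonical stutter-free form of v
  obtain ⟨f, hf, hrem, hsf⟩ := exists_canon v
  set v' : Word α := fun k => v (f k) with hv'
  have hremoval : StutterRemoval v v' := ⟨f, hf, fun k => rfl, hrem⟩
  -- step 2 : ψ on v ↔ ψ on v'
  have h2 : ψ.Sat v 0 ↔ ψ.Sat v' 0 := by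
    have := sat_idxc v v' f hf (fun k => rfl)
      (fun i hi => (hrem i hi).1) ψ (qual_tr p0 L φ) 0
    rwa [Nat.le_zero.mp (idxc_min f hf (Nat.zero_le (f 0)))] at this
  -- step 3 : ψ on v' ↔ φ on v'
  have h3 : ψ.Sat v' 0 ↔ φ.Sat v' 0 := by
    apply sat_tr p0 L v'
    · intro j p hp
      exact hp.2
    · exact hsf
  -- step 4/5 : v' ∈ W ↔ v ∈ W
  have h5 : v' ∈ W ↔ v ∈ W := by
    constructor
    · intro h; exact hclosed v' h v (Or.inr hremoval)
    · intro h; exact hclosed v h v' (Or.inl hremoval)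
  -- step 6 : φ on v ↔ φ on w
  have h6 : φ.Sat w 0 ↔ φ.Sat v 0 := hagree φ (fun q hq => hq) 0
  rw [h1, h2, h3]
  have hv'W : φ.Sat v' 0 ↔ v' ∈ W := by rw [hexpr]; exact Iff.rfl
  rw [hv'W, h5, hexpr]
  simp only [Set.mem_setOf_eq]
  exact h6.symm

/-- (Peled–Wilke) Every stutter-closed LTL-expressible set of ω-words is expressible by a
qualitative (X-free) LTL formula. -/
theorem stmt1 {α : Type} (W : Set (Word α)) (hclosed : ClosedUnderStuttering W)
    (φ : LTL α) (hexpr : W = {w : Word α | φ.Sat w 0}) :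
    ∃ ψ : LTL α, ψ.Qualitative ∧ {w : Word α | ψ.Sat w 0} = W := by
  exact stmt1' W hclosed φ hexpr

end PW
end

section
/- Suppose w is an ω-word over 𝒫 ∪ {s} (s ∉ 𝒫) such that, for every position j, the truth value of s changes between j and j+1 if and only if the restriction of w to 𝒫 changes between j and j+1 (i.e., (s ∈ w(j+1)) ≠ (s ∈ w(j)) iff w(j+1)∖{s} ≠ w(j)∖{s}). Let π be a purely propositional formula over 𝒫 and i a position such that there exists a non-stuttering step at or after i, and let j be the least position j ≥ i with w(j+1) ≠ w(j). Then w,i ⊨ X⟨π⟩ if and only if w,j+1 ⊨ π. -/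
def LTL.or {α : Type} (φ ψ : LTL α) : LTL α := .not (.and (.not φ) (.not ψ))
def LTL.imp {α : Type} (φ ψ : LTL α) : LTL α := LTL.or (.not φ) ψ
/-- Release: `φ R ψ := ¬(¬φ U ¬ψ)`. -/
def LTL.release {α : Type} (φ ψ : LTL α) : LTL α := .not (.until_ (.not φ) (.not ψ))
def LTL.map {α β : Type} (f : α → β) : LTL α → LTL β
  | .atom p => .atom (f p)
  | .not φ => .not (φ.map f)
  | .and φ ψ => .and (φ.map f) (ψ.map f)
  | .until_ φ ψ => .until_ (φ.map f) (ψ.map f)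
  | .next φ => .next (φ.map f)

/-- The fresh letter `s`, adjoined to the alphabet `α` as `Sum.inr ()`. -/
def sL {α : Type} : LTL (α ⊕ Unit) := .atom (Sum.inr ())

/-- The qualitative relaxed next
`X⟨π⟩ := (s U π ∨ ¬s U π) ∧ (π ∧ s ⇒ ¬s R π) ∧ (π ∧ ¬s ⇒ s R π)`. -/
def relaxX {α : Type} (π : LTL (α ⊕ Unit)) : LTL (α ⊕ Unit) :=
  LTL.and (LTL.or (.until_ sL π) (.until_ (.not sL) π))
    (LTL.and ((LTL.and π sL).imp (LTL.release (.not sL) π))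
             ((LTL.and π (.not sL)).imp (LTL.release sL π)))

lemma map_prop {α β : Type} (f : α → β) (π : LTL α) (h : π.Propositional) :
    (π.map f).Propositional := by
  induction π with
  | atom p => trivial
  | not φ ih => exact ih h
  | and φ ψ ih1 ih2 => exact ⟨ih1 h.1, ih2 h.2⟩
  | until_ φ ψ ih1 ih2 => exact h.elim
  | next φ ih => exact h.elim

lemma sat_congr_s11 {α : Type} (φ : LTL α) (hφ : φ.Propositional) (w : Word α) (k k' : ℕ)
    (h : w k = w k') : φ.Sat w k ↔ φ.Sat w k' := by
  induction φ with
  | atom p => simp [LTL.Sat, h]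
  | not ψ ih => exact not_congr (ih hφ)
  | and φ1 φ2 ih1 ih2 => exact and_congr (ih1 hφ.1) (ih2 hφ.2)
  | until_ φ1 φ2 ih1 ih2 => exact hφ.elim
  | next ψ ih => exact hφ.elim

lemma sat_or {α : Type} (φ ψ : LTL α) (w : Word α) (i : ℕ) :
    (LTL.or φ ψ).Sat w i ↔ φ.Sat w i ∨ ψ.Sat w i := by
  simp [LTL.or, LTL.Sat]; tauto

lemma sat_imp {α : Type} (φ ψ : LTL α) (w : Word α) (i : ℕ) :
    (LTL.imp φ ψ).Sat w i ↔ (φ.Sat w i → ψ.Sat w i) := by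
  rw [LTL.imp, sat_or]; simp [LTL.Sat]; tauto

lemma sat_release {α : Type} (φ ψ : LTL α) (w : Word α) (i : ℕ) :
    (LTL.release φ ψ).Sat w i ↔
      ∀ k, i ≤ k → (ψ.Sat w k ∨ ∃ m, i ≤ m ∧ m < k ∧ φ.Sat w m) := by
  simp only [LTL.release, LTL.Sat]
  push_neg
  constructor
  · intro h k hk
    by_cases hψ : ψ.Sat w k
    · exact Or.inl hψ
    · obtain ⟨m, h1, h2, h3⟩ := h k hk hψ
      exact Or.inr ⟨m, h1, h2, h3⟩
  · intro h k hk hψ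
    rcases h k hk with h' | h'
    · exact absurd h' hψ
    · exact h'

/-- If every truth-value change of `s` coincides with a change of the restriction of the
word to `𝒫`, `π` is purely propositional over `𝒫`, and `j` is the least position `≥ i`
where the word changes, then `w,i ⊨ X⟨π⟩ ↔ w,j+1 ⊨ π`. -/
theorem stmt11 {α : Type} (w : Word (α ⊕ Unit))
    (hlink : ∀ j : ℕ,
      (¬((Sum.inr () ∈ w (j+1)) ↔ (Sum.inr () ∈ w j))) ↔
        (w (j+1) \ {Sum.inr ()} ≠ w j \ {Sum.inr ()}))
    (π : LTL α) (hπ : π.Propositional) (i j : ℕ)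
    (hij : i ≤ j) (hchange : w (j+1) ≠ w j)
    (hleast : ∀ m, i ≤ m → m < j → w (m+1) = w m) :
    (relaxX (π.map Sum.inl)).Sat w i ↔ (π.map Sum.inl).Sat w (j+1) := by
  set s : α ⊕ Unit := Sum.inr () with hs
  set φ : LTL (α ⊕ Unit) := π.map Sum.inl with hφdef
  have hφ : φ.Propositional := map_prop _ _ hπ
  have hstut : ∀ m, i ≤ m → m ≤ j → w m = w i := by
    intro m h1 h2
    induction m, h1 using Nat.le_induction with
    | base => rfl
    | succ n hn ih => rw [hleast n hn (by omega), ih (by omega)]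
  have hP : ∀ m, i ≤ m → m ≤ j → (φ.Sat w m ↔ φ.Sat w i) :=
    fun m h1 h2 => sat_congr_s11 φ hφ w m i (hstut m h1 h2)
  have hS : ∀ m, i ≤ m → m ≤ j → (s ∈ w m ↔ s ∈ w i) :=
    fun m h1 h2 => by rw [hstut m h1 h2]
  have hflip : ¬((s ∈ w (j+1)) ↔ (s ∈ w j)) := by
    intro hiff
    apply hchange
    have hres : w (j+1) \ {s} = w j \ {s} := by
      by_contra h
      exact ((hlink j).mpr h) hiff
    ext x
    by_cases hx : x = s
    · subst hx; exact hiff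
    · constructor
      · intro hxm
        have : x ∈ w (j+1) \ {s} := ⟨hxm, hx⟩
        rw [hres] at this; exact this.1
      · intro hxm
        have : x ∈ w j \ {s} := ⟨hxm, hx⟩
        rw [← hres] at this; exact this.1
  have hsj : s ∈ w j ↔ s ∈ w i := hS j hij le_rfl
  have hgoal : (relaxX φ).Sat w i ↔
      (((∃ k, i ≤ k ∧ φ.Sat w k ∧ ∀ m, i ≤ m → m < k → s ∈ w m) ∨
        (∃ k, i ≤ k ∧ φ.Sat w k ∧ ∀ m, i ≤ m → m < k → s ∉ w m)) ∧
       ((φ.Sat w i ∧ s ∈ w i) → ∀ k, i ≤ k →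
          (φ.Sat w k ∨ ∃ m, i ≤ m ∧ m < k ∧ s ∉ w m)) ∧
       ((φ.Sat w i ∧ s ∉ w i) → ∀ k, i ≤ k →
          (φ.Sat w k ∨ ∃ m, i ≤ m ∧ m < k ∧ s ∈ w m))) := by
    exact and_congr (sat_or _ _ _ _)
      (and_congr ((sat_imp _ _ _ _).trans (imp_congr_right fun _ => sat_release _ _ _ _))
        ((sat_imp _ _ _ _).trans (imp_congr_right fun _ => sat_release _ _ _ _)))
  rw [hgoal]
  constructor
  · rintro ⟨HA, HB, HC⟩
    by_contra hnot
    by_cases hb : s ∈ w i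
    · have hsj1 : s ∉ w (j+1) := fun h => hflip ⟨fun _ => hsj.mpr hb, fun _ => h⟩
      have hPi : φ.Sat w i := by
        rcases HA with ⟨k, hk1, hk2, hk3⟩ | ⟨k, hk1, hk2, hk3⟩
        · have hkle : k ≤ j := by
            by_contra h
            push_neg at h
            rcases Nat.eq_or_lt_of_le h with h' | h'
            · rw [← h'] at hk2; exact hnot hk2
            · exact hsj1 (hk3 (j+1) (by omega) (by omega))
          exact (hP k hk1 hkle).mp hk2
        · have hk : k = i := by
            by_contra h
            exact (hk3 i le_rfl (by omega)) hb
          exact hk ▸ hk2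
      rcases HB ⟨hPi, hb⟩ (j+1) (by omega) with h | ⟨m, hm1, hm2, hm3⟩
      · exact hnot h
      · exact hm3 ((hS m hm1 (by omega)).mpr hb)
    · have hsj1 : s ∈ w (j+1) := by
        by_contra h
        exact hflip ⟨fun hh => absurd hh h, fun hh => absurd hh (fun hh' => hb (hsj.mp hh'))⟩
      have hPi : φ.Sat w i := by
        rcases HA with ⟨k, hk1, hk2, hk3⟩ | ⟨k, hk1, hk2, hk3⟩
        · have hk : k = i := by
            by_contra h
            exact hb (hk3 i le_rfl (by omega))
          exact hk ▸ hk2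
        · have hkle : k ≤ j := by
            by_contra h
            push_neg at h
            rcases Nat.eq_or_lt_of_le h with h' | h'
            · rw [← h'] at hk2; exact hnot hk2
            · exact (hk3 (j+1) (by omega) (by omega)) hsj1
          exact (hP k hk1 hkle).mp hk2
      rcases HC ⟨hPi, hb⟩ (j+1) (by omega) with h | ⟨m, hm1, hm2, hm3⟩
      · exact hnot h
      · exact hb ((hS m hm1 (by omega)).mp hm3)
  · intro hPj1
    by_cases hb : s ∈ w i
    · have hsj1 : s ∉ w (j+1) := fun h => hflip ⟨fun _ => hsj.mpr hb, fun _ => h⟩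
      refine ⟨Or.inl ⟨j+1, by omega, hPj1, fun m h1 h2 => (hS m h1 (by omega)).mpr hb⟩,
        ?_, fun h => absurd hb h.2⟩
      rintro ⟨hPi, -⟩ k hk
      rcases lt_or_ge k (j+1) with h | h
      · exact Or.inl ((hP k hk (by omega)).mpr hPi)
      · rcases Nat.eq_or_lt_of_le h with h' | h'
        · exact Or.inl (h' ▸ hPj1)
        · exact Or.inr ⟨j+1, by omega, h', hsj1⟩
    · have hsj1 : s ∈ w (j+1) := by
        by_contra h
        exact hflip ⟨fun hh => absurd hh h, fun hh => absurd hh (fun hh' => hb (hsj.mp hh'))⟩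
      refine ⟨Or.inr ⟨j+1, by omega, hPj1, fun m h1 h2 hm => hb ((hS m h1 (by omega)).mp hm)⟩,
        fun h => absurd h.2 hb, ?_⟩
      rintro ⟨hPi, -⟩ k hk
      rcases lt_or_ge k (j+1) with h | h
      · exact Or.inl ((hP k hk (by omega)).mpr hPi)
      · rcases Nat.eq_or_lt_of_le h with h' | h'
        · exact Or.inl (h' ▸ hPj1)
        · exact Or.inr ⟨j+1, by omega, h', hsj1⟩
end

section
/- For every nonempty finite set P of propositional letters and all positive integers v < k, the set V(P, v/k) of ω-words in which P has variability bounded by v/k is not closed under stuttering: there exist a word w ∈ V(P, v/k) and a word w' stutter-equivalent to w with w' ∉ V(P, v/k). -/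
/-- Projection of a word onto a set `P` of letters. -/
def projW {α : Type} (w : Word α) (P : Set α) : Word α := fun n => w n ∩ P

/-- `P` has variability bounded by `v/k` in `w`: every length-`k` subword of the
projection of `w` onto `P` contains at most `v` non-stuttering steps. -/
def BoundedVariability {α : Type} (P : Set α) (v k : ℕ) (w : Word α) : Prop :=
  ∀ i : ℕ, Set.ncard {j | i ≤ j ∧ j < i + k ∧ NonStutterStep (projW w P) j} ≤ v

/-- `V(P, v/k)`: the set of all ω-words in which `P` has variability bounded by `v/k`. -/
def VarSet {α : Type} (P : Set α) (v k : ℕ) : Set (Word α) :=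
  {w | BoundedVariability P v k w}

/-- For every nonempty finite set `P` of letters and all positive integers `v < k`,
the set `V(P, v/k)` is not closed under stuttering. -/
theorem stmt14 {α : Type} (P : Set α) (hne : P.Nonempty) (hfin : P.Finite)
    (v k : ℕ) (hv : 0 < v) (hvk : v < k) :
    ∃ w ∈ VarSet P v k, ∃ w' : Word α, StutterEquiv w w' ∧ w' ∉ VarSet P v k := by
  obtain ⟨p, hp⟩ := hne
  have hk : 0 < k := hv.trans hvk
  have hk2 : 2 ≤ k := by omega
  have hpe : ({p} : Set α) ≠ (∅ : Set α) := Set.singleton_ne_empty p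
  set g : ℕ → Set α := fun m => if Even m then (∅ : Set α) else {p} with hgdef
  have hg : ∀ m n, g m = g n ↔ (Even m ↔ Even n) := by
    intro m n
    by_cases hm : Even m <;> by_cases hn : Even n <;>
      simp [hgdef, hm, hn, hpe, hpe.symm] <;> tauto
  set w : Word α := fun n => g (n / k) with hwdef
  have hsub : ∀ n, g n ∩ P = g n := by
    intro n
    rw [hgdef]
    by_cases h : Even n
    · simp [h]
    · simp only [h, if_false]
      exact Set.inter_eq_left.mpr (Set.singleton_subset_iff.mpr hp)
  have hprojw : projW w P = w := funext fun n => hsub _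
  have hprojw' : projW g P = g := funext fun n => hsub _
  have hflip : ∀ m, g (m + 1) ≠ g m := by
    intro m h
    rw [hg, Nat.even_add_one] at h
    exact iff_not_self h.symm
  have hsucc : ∀ j, w (j + 1) = w j ↔ ¬ (k ∣ (j + 1)) := by
    intro j
    have hd : (j + 1) / k = j / k + if k ∣ j + 1 then 1 else 0 := Nat.succ_div
    by_cases hdvd : k ∣ (j + 1)
    · simp only [hdvd, if_true] at hd
      simp only [hwdef, hd]
      exact iff_of_false (hflip (j / k)) (by simpa using hdvd)
    · simp only [hdvd, if_false, Nat.add_zero] at hd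
      simp [hwdef, hd, hdvd]
  have hjump : ∀ j, w (j + k) ≠ w j := by
    intro j
    have hq : (j + k) / k = j / k + 1 := Nat.add_div_right j hk
    simp only [hwdef, hq]
    exact hflip (j / k)
  have hNSS : ∀ j, NonStutterStep w j ↔ k ∣ (j + 1) := by
    intro j
    constructor
    · rintro (h | h)
      · by_contra hd
        exact h ((hsucc j).mpr hd)
      · exact absurd (h k) (hjump j)
    · intro h
      left
      intro heq
      exact ((hsucc j).mp heq) h
  refine ⟨w, ?_, g, ?_, ?_⟩
  · -- w ∈ VarSet
    intro i
    rw [hprojw]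
    have hss : {j | i ≤ j ∧ j < i + k ∧ NonStutterStep w j}.Subsingleton := by
      rintro a ⟨ha1, ha2, ha3⟩ b ⟨hb1, hb2, hb3⟩
      rw [hNSS] at ha3 hb3
      rcases le_total a b with hab | hab
      · have hd : k ∣ (b + 1) - (a + 1) := Nat.dvd_sub hb3 ha3
        have := Nat.eq_zero_of_dvd_of_lt hd (show (b + 1) - (a + 1) < k by omega)
        omega
      · have hd : k ∣ (a + 1) - (b + 1) := Nat.dvd_sub ha3 hb3
        have := Nat.eq_zero_of_dvd_of_lt hd (show (a + 1) - (b + 1) < k by omega)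
        omega
    calc {j | i ≤ j ∧ j < i + k ∧ NonStutterStep w j}.ncard
        ≤ 1 := (Set.ncard_le_one hss.finite).mpr fun a ha b hb => hss ha hb
      _ ≤ v := hv
  · -- StutterEquiv w w'
    left
    refine ⟨fun n => (k - 1) + n * k, ?_, ?_, ?_⟩
    · apply strictMono_nat_of_lt_succ
      intro n
      have : n * k < (n + 1) * k := by
        exact (Nat.mul_lt_mul_right hk).mpr (by omega)
      omega
    · intro m
      have hdiv : ((k - 1) + m * k) / k = m := by
        rw [Nat.add_mul_div_right _ _ hk, Nat.div_eq_of_lt (by omega)]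
        omega
      show g m = w ((k - 1) + m * k)
      simp only [hwdef]
      rw [hdiv]
    · intro i hi
      have hmod : i % k ≠ k - 1 := by
        intro h
        apply hi
        refine ⟨i / k, ?_⟩
        show (k - 1) + (i / k) * k = i
        rw [← h, Nat.mul_comm]
        exact Nat.mod_add_div i k
      have hmk : i % k < k := Nat.mod_lt _ hk
      have hnd : ¬ k ∣ (i + 1) := by
        intro hd
        have h1 : (i + 1) % k = 0 := Nat.dvd_iff_mod_eq_zero.mp hd
        have h2 : (i + 1) % k = (i % k + 1 % k) % k := Nat.add_mod i 1 k
        have h3 : 1 % k = 1 := Nat.mod_eq_of_lt (by omega)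
        rw [h3] at h2
        have h4 : (i % k + 1) % k = i % k + 1 := Nat.mod_eq_of_lt (by omega)
        omega
      exact ⟨(hsucc i).mpr hnd, i + k, by omega, hjump i⟩
  · -- w' ∉ VarSet
    intro hmem
    have h0 := hmem 0
    rw [hprojw'] at h0
    have hall : ∀ j, NonStutterStep g j := by
      intro j
      exact Or.inl (hflip j)
    have hset : {j | 0 ≤ j ∧ j < 0 + k ∧ NonStutterStep g j} = ↑(Finset.range k) := by
      ext j
      simp [hall j]
    rw [hset, Set.ncard_coe_finset, Finset.card_range] at h0
    omega
end
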